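/- If M ∈ 𝓜(6,7,C) with |C| = 19 and some colour has frequency at least 5, then c₃₊ + c₄₊ ≤ 3, where c₃₊ (resp. c₄₊) is the number of colours of frequency at least 3 (resp. at least 4). -/
import Mathlib


/-- `M ∈ 𝓜(p,q,C)`: all lines of `M` have pairwise distinct entries and every
pair of distinct colours of `C` is row-based or column-based in `M`. -/
def MemM {p q : ℕ} {C : Type*} (M : Fin p → Fin q → C) : Prop :=
  (∀ i, Function.Injective (M i)) ∧
  (∀ j, Function.Injective fun i => M i j) ∧
  ∀ c₁ c₂ : C, c₁ ≠ c₂ →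
    (∃ i j₁ j₂, M i j₁ = c₁ ∧ M i j₂ = c₂) ∨
    (∃ i₁ i₂ j, M i₁ j = c₁ ∧ M i₂ j = c₂)

/-- The frequency of a colour: its number of occurrences as an entry of `M`. -/
noncomputable def freq {C : Type*} (M : Fin 6 → Fin 7 → C) (γ : C) : ℕ :=
  Nat.card {x : Fin 6 × Fin 7 // M x.1 x.2 = γ}

lemma freq_eq_filter {C : Type*} [Fintype C] [DecidableEq C] (M : Fin 6 → Fin 7 → C) (c : C) :
    freq M c = (Finset.univ.filter fun x : Fin 6 × Fin 7 => M x.1 x.2 = c).card := by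
  simp [freq, Nat.card_eq_fintype_card, Fintype.card_subtype]

lemma sum_freq {C : Type*} [Fintype C] [DecidableEq C] (M : Fin 6 → Fin 7 → C) :
    ∑ c : C, freq M c = 42 := by
  have h := Finset.card_eq_sum_card_fiberwise
    (f := fun x : Fin 6 × Fin 7 => M x.1 x.2) (s := Finset.univ) (t := Finset.univ)
    (fun x _ => Finset.mem_univ _)
  simp only [freq_eq_filter]
  rw [← h]
  simp

lemma two_le_freq {C : Type*} [Fintype C] (M : Fin 6 → Fin 7 → C) (hM : MemM M)
    (hC : Fintype.card C = 19) (c : C) : 2 ≤ freq M c := by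
  classical
  by_contra h
  push_neg at h
  rw [freq, Nat.card_eq_fintype_card] at h
  -- c appears somewhere
  obtain ⟨c', hc'⟩ : ∃ c' : C, c' ≠ c := Fintype.exists_ne_of_one_lt_card (by omega) c
  have hex : ∃ x : Fin 6 × Fin 7, M x.1 x.2 = c := by
    rcases hM.2.2 c c' (Ne.symm hc') with ⟨i, j₁, j₂, h1, _⟩ | ⟨i₁, i₂, j, h1, _⟩
    · exact ⟨(i, j₁), h1⟩
    · exact ⟨(i₁, j), h1⟩
  obtain ⟨⟨i₀, j₀⟩, hx0⟩ := hex
  have huniq : ∀ x : Fin 6 × Fin 7, M x.1 x.2 = c → x = (i₀, j₀) := by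
    intro x hx
    have h1 : Fintype.card {x : Fin 6 × Fin 7 // M x.1 x.2 = c} ≤ 1 := by omega
    have := Fintype.card_le_one_iff.mp h1 ⟨x, hx⟩ ⟨(i₀, j₀), hx0⟩
    exact congrArg Subtype.val this
  have hsurj : Function.Surjective (Sum.elim (M i₀) (fun i => M i j₀)) := by
    intro c''
    by_cases hcc : c'' = c
    · exact ⟨Sum.inl j₀, by simp [hx0, hcc]⟩
    · rcases hM.2.2 c c'' (fun h => hcc h.symm) with ⟨i, j₁, j₂, h1, h2⟩ | ⟨i₁, i₂, j, h1, h2⟩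
      · have := huniq (i, j₁) h1
        have hi : i = i₀ := congrArg Prod.fst this
        exact ⟨Sum.inl j₂, by simp [← hi, h2]⟩
      · have := huniq (i₁, j) h1
        have hj : j = j₀ := congrArg Prod.snd this
        exact ⟨Sum.inr i₂, by simp [← hj, h2]⟩
  have := Fintype.card_le_of_surjective _ hsurj
  simp [hC] at this

theorem c3plus_add_c4plus_le_three {C : Type*} [Fintype C]
    (M : Fin 6 → Fin 7 → C) (hM : MemM M) (hC : Fintype.card C = 19)
    (h5 : ∃ c : C, 5 ≤ freq M c) :
    Nat.card {c : C // 3 ≤ freq M c} + Nat.card {c : C // 4 ≤ freq M c} ≤ 3 := by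
  classical
  obtain ⟨c₀, hc₀⟩ := h5
  set f : C → ℕ := freq M with hf
  have h2 : ∀ c, 2 ≤ f c := two_le_freq M hM hC
  have hsum : ∑ c : C, f c = 42 := sum_freq M
  set g : C → ℕ := fun c => (if 3 ≤ f c then 1 else 0) + (if 4 ≤ f c then 1 else 0) + 2
    with hg
  have hgle : ∀ c : C, g c ≤ f c := by
    intro c
    have := h2 c
    simp only [hg]
    split_ifs <;> omega
  have hsumg : ∑ c : C, g c + 1 ≤ 42 := by
    rw [← hsum, ← Finset.add_sum_erase _ g (Finset.mem_univ c₀),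
      ← Finset.add_sum_erase _ f (Finset.mem_univ c₀)]
    have h1 : g c₀ + 1 ≤ f c₀ := by
      simp only [hg]; split_ifs <;> omega
    have h2' : ∑ c ∈ Finset.univ.erase c₀, g c ≤ ∑ c ∈ Finset.univ.erase c₀, f c :=
      Finset.sum_le_sum fun c _ => hgle c
    omega
  have hsplit : ∑ c : C, g c =
      (Finset.univ.filter fun c => 3 ≤ f c).card +
      (Finset.univ.filter fun c => 4 ≤ f c).card + 2 * Fintype.card C := by
    simp only [hg, Finset.sum_add_distrib, ← Finset.card_filter, Finset.sum_const,
      Finset.card_univ, smul_eq_mul, mul_comm]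
  have hA : Nat.card {c : C // 3 ≤ f c} = (Finset.univ.filter fun c => 3 ≤ f c).card := by
    rw [Nat.card_eq_fintype_card, Fintype.card_subtype]
  have hB : Nat.card {c : C // 4 ≤ f c} = (Finset.univ.filter fun c => 4 ≤ f c).card := by
    rw [Nat.card_eq_fintype_card, Fintype.card_subtype]
  rw [hA, hB]
  omega
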